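/- Let φ_Δ be a nowhere-vanishing differentiable characteristic function with φ_Δ(0) = 1, and let ψ be a differentiable function on [−m, m] with ψ(0) = 1. Suppose that for all |u| ≤ m, |ψ(u) − φ_Δ(u)| ≤ (ζ/γ)·|φ_Δ(u)| with 0 < ζ < γ. Then for all |u| ≤ m, |∫₀^u (ψ'(v)/ψ(v) − φ_Δ'(v)/φ_Δ(v)) dv| ≤ (γ/ζ)·log(γ/(γ−ζ))·|ψ(u) − φ_Δ(u)|/|φ_Δ(u)|. -/

import Mathlib

open MeasureTheory intervalIntegral

lemma aux_log_norm_bound {z : ℂ} {r : ℝ} (hr0 : 0 < r) (hr1 : r < 1) (hzr : ‖z‖ ≤ r) :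
    ‖Complex.log (1 + z)‖ ≤ (-Real.log (1 - r) / r) * ‖z‖ := by
  have hz1 : ‖z‖ < 1 := lt_of_le_of_lt hzr hr1
  have hS := Complex.hasSum_taylorSeries_log hz1
  have hg : HasSum (fun n : ℕ => r ^ n / n) (-Real.log (1 - r)) := by
    have h := Real.hasSum_pow_div_log_of_abs_lt_one (x := r) (by rwa [abs_of_pos hr0])
    have h2 := (hasSum_nat_add_iff (f := fun n : ℕ => r ^ n / n) 1).mp (by simpa using h)
    simpa using h2
  have hmaj : ∀ n : ℕ, ‖(-1 : ℂ) ^ (n + 1) * z ^ n / n‖ ≤ (‖z‖ / r) * (r ^ n / n) := by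
    intro n
    cases n with
    | zero => simp
    | succ k =>
      have hnorm : ‖(-1 : ℂ) ^ (k + 1 + 1) * z ^ (k + 1) / ((k + 1 : ℕ) : ℂ)‖
          = ‖z‖ ^ (k + 1) / ((k : ℝ) + 1) := by
        have hc : ‖(k : ℂ) + 1‖ = (k : ℝ) + 1 := by
          rw [show ((k : ℂ) + 1) = ((k + 1 : ℕ) : ℂ) by push_cast; ring,
            Complex.norm_natCast]
          push_cast; ring
        simp [norm_div, norm_mul, norm_pow, hc]
      rw [hnorm]
      have h1 : ‖z‖ ^ (k + 1) ≤ (‖z‖ / r) * r ^ (k + 1) := by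
        have : (‖z‖ / r) * r ^ (k + 1) = ‖z‖ * r ^ k := by
          field_simp
          ring
        rw [this, pow_succ']
        exact mul_le_mul_of_nonneg_left (pow_le_pow_left₀ (norm_nonneg z) hzr k)
          (norm_nonneg z)
      have hk : (0 : ℝ) < (k : ℝ) + 1 := by positivity
      calc ‖z‖ ^ (k + 1) / ((k : ℝ) + 1) ≤ ((‖z‖ / r) * r ^ (k + 1)) / ((k : ℝ) + 1) := by
            gcongr
        _ = (‖z‖ / r) * (r ^ (k + 1) / ((k + 1 : ℕ) : ℝ)) := by push_cast; ring
  have hgs : Summable (fun n : ℕ => (‖z‖ / r) * (r ^ n / n)) := (hg.mul_left _).summable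
  have hsn : Summable (fun n : ℕ => ‖(-1 : ℂ) ^ (n + 1) * z ^ n / n‖) :=
    Summable.of_nonneg_of_le (fun n => norm_nonneg _) hmaj hgs
  calc ‖Complex.log (1 + z)‖ = ‖∑' n : ℕ, (-1 : ℂ) ^ (n + 1) * z ^ n / n‖ := by
        rw [hS.tsum_eq]
    _ ≤ ∑' n : ℕ, ‖(-1 : ℂ) ^ (n + 1) * z ^ n / n‖ := norm_tsum_le_tsum_norm hsn
    _ ≤ ∑' n : ℕ, (‖z‖ / r) * (r ^ n / n) := Summable.tsum_le_tsum hmaj hsn hgs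
    _ = (‖z‖ / r) * (-Real.log (1 - r)) := (hg.mul_left _).tsum_eq
    _ = (-Real.log (1 - r) / r) * ‖z‖ := by ring

/-- Control of the distinguished logarithm: if `ψ` is uniformly close to a
nowhere-vanishing differentiable characteristic function `φΔ` in relative error
`ζ/γ < 1`, then the difference of distinguished logarithms is controlled. -/
theorem stmt_9 (ν : Measure ℝ) [IsProbabilityMeasure ν]
    (φΔ ψ : ℝ → ℂ)
    (hchar : ∀ u, φΔ u = ∫ x, Complex.exp (u * x * Complex.I) ∂ν)
    (hφdiff : Differentiable ℝ φΔ) (hφne : ∀ u, φΔ u ≠ 0)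
    (m : ℝ) (hm : 0 < m)
    (hψdiff : ∀ u ∈ Set.Icc (-m) m, DifferentiableAt ℝ ψ u)
    (hψ0 : ψ 0 = 1)
    (ζ γ : ℝ) (hζ : 0 < ζ) (hζγ : ζ < γ)
    (hclose : ∀ u, |u| ≤ m → ‖ψ u - φΔ u‖ ≤ (ζ / γ) * ‖φΔ u‖) :
    ∀ u, |u| ≤ m →
      ‖∫ v in (0 : ℝ)..u, (deriv ψ v / ψ v - deriv φΔ v / φΔ v)‖
        ≤ (γ / ζ) * Real.log (γ / (γ - ζ)) * (‖ψ u - φΔ u‖ / ‖φΔ u‖) := by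
  intro u hu
  have hγ : 0 < γ := hζ.trans hζγ
  have hγζ : 0 < γ - ζ := sub_pos.mpr hζγ
  have hr0 : 0 < ζ / γ := div_pos hζ hγ
  have hr1 : ζ / γ < 1 := (div_lt_one hγ).mpr hζγ
  have hlogpos : 0 ≤ Real.log (γ / (γ - ζ)) := by
    apply Real.log_nonneg
    rw [le_div_iff₀ hγζ]
    linarith
  have hrhs : 0 ≤ (γ / ζ) * Real.log (γ / (γ - ζ)) * (‖ψ u - φΔ u‖ / ‖φΔ u‖) := by
    apply mul_nonneg (mul_nonneg (by positivity) hlogpos)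
    positivity
  by_cases hint : IntervalIntegrable (fun v => deriv ψ v / ψ v - deriv φΔ v / φΔ v)
      volume 0 u
  · -- main case
    have hmem : ∀ v ∈ Set.uIcc (0 : ℝ) u, |v| ≤ m := by
      intro v hv
      obtain ⟨hu1, hu2⟩ := abs_le.mp hu
      rcases le_total 0 u with h | h
      · rw [Set.uIcc_of_le h] at hv
        rw [abs_le]; exact ⟨by linarith [hv.1], by linarith [hv.2]⟩
      · rw [Set.uIcc_of_ge h] at hv
        rw [abs_le]; exact ⟨by linarith [hv.1], by linarith [hv.2]⟩
    have hψne : ∀ v, |v| ≤ m → ψ v ≠ 0 := by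
      intro v hv hzero
      have h1 := hclose v hv
      have hφpos : 0 < ‖φΔ v‖ := norm_pos_iff.mpr (hφne v)
      rw [hzero, zero_sub, norm_neg] at h1
      nlinarith
    have hslit : ∀ v, |v| ≤ m → ψ v / φΔ v ∈ Complex.slitPlane := by
      intro v hv
      have hφpos : 0 < ‖φΔ v‖ := norm_pos_iff.mpr (hφne v)
      have hnd : ‖ψ v / φΔ v - 1‖ < 1 := by
        have : ψ v / φΔ v - 1 = (ψ v - φΔ v) / φΔ v := div_sub_one (hφne v) ▸ rfl
        rw [this, norm_div]
        rw [div_lt_one hφpos]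
        exact lt_of_le_of_lt (hclose v hv) (by nlinarith)
      rw [Complex.mem_slitPlane_iff]
      left
      have hre : |(ψ v / φΔ v - 1).re| < 1 :=
        lt_of_le_of_lt (Complex.abs_re_le_norm _) hnd
      have : (ψ v / φΔ v - 1).re = (ψ v / φΔ v).re - 1 := by rw [Complex.sub_re, Complex.one_re]
      rw [this] at hre
      have := (abs_lt.mp hre).1
      linarith
    set F : ℝ → ℂ := fun v => Complex.log (ψ v / φΔ v) with hF
    have key : ∀ v ∈ Set.uIcc (0 : ℝ) u,
        HasDerivAt F (deriv ψ v / ψ v - deriv φΔ v / φΔ v) v := by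
      intro v hv
      have hvm := hmem v hv
      have hψv := hψne v hvm
      have hφv := hφne v
      have hdψ : HasDerivAt ψ (deriv ψ v) v :=
        (hψdiff v (abs_le.mp hvm)).hasDerivAt
      have hdφ : HasDerivAt φΔ (deriv φΔ v) v := (hφdiff v).hasDerivAt
      have hg : HasDerivAt (fun w => ψ w / φΔ w)
          ((deriv ψ v * φΔ v - ψ v * deriv φΔ v) / φΔ v ^ 2) v := hdψ.div hdφ hφv
      have hlog := Complex.hasDerivAt_log (hslit v hvm)
      have hcomp := hlog.comp v hg
      convert hcomp using 1
      · rfl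
      · rfl
      field_simp
    rw [intervalIntegral.integral_eq_sub_of_hasDerivAt key hint]
    have hφ0 : φΔ 0 = 1 := by
      rw [hchar 0]
      simp
    have hF0 : F 0 = 0 := by
      simp [hF, hψ0, hφ0]
    rw [hF0, sub_zero]
    have hne : φΔ u ≠ 0 := hφne u
    have hrw : ψ u / φΔ u = 1 + (ψ u / φΔ u - 1) := by ring
    have hznorm : ‖ψ u / φΔ u - 1‖ = ‖ψ u - φΔ u‖ / ‖φΔ u‖ := by
      have : ψ u / φΔ u - 1 = (ψ u - φΔ u) / φΔ u := by field_simp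
      rw [this, norm_div]
    have hzr : ‖ψ u / φΔ u - 1‖ ≤ ζ / γ := by
      rw [hznorm]
      rw [div_le_iff₀ (norm_pos_iff.mpr hne)]
      exact hclose u hu
    have hbound : ‖F u‖ ≤ (-Real.log (1 - ζ / γ) / (ζ / γ)) * ‖ψ u / φΔ u - 1‖ := by
      have h := aux_log_norm_bound hr0 hr1 hzr
      rw [← hrw] at h
      exact h
    have hconst : -Real.log (1 - ζ / γ) / (ζ / γ) = (γ / ζ) * Real.log (γ / (γ - ζ)) := by
      have h1 : 1 - ζ / γ = (γ - ζ) / γ := by field_simp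
      rw [h1, Real.log_div hγζ.ne' hγ.ne', Real.log_div hγ.ne' hγζ.ne']
      field_simp
      ring
    calc ‖F u‖ ≤ (-Real.log (1 - ζ / γ) / (ζ / γ)) * ‖ψ u / φΔ u - 1‖ := hbound
      _ = (γ / ζ) * Real.log (γ / (γ - ζ)) * (‖ψ u - φΔ u‖ / ‖φΔ u‖) := by
          rw [hconst, hznorm]
  · rw [intervalIntegral.integral_undef hint]
    simpa using hrhs
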